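/- In the binary-sensing model, each coefficient estimate is unbiased: for every j, E[α̂_j] = α_j = ⟨f, φ_j⟩, where α̂_j = (c/n) Σ_{i=1}^n (φ_j*(X_i) / p_X(X_i)) B_i. -/

import Mathlib

open MeasureTheory ProbabilityTheory Filter
open scoped ENNReal Topology

noncomputable section

/-- Sign function: `+1` if `u > 0` and `-1` otherwise. -/
def sgn' (u : ℝ) : ℝ := if 0 < u then 1 else -1

/-- Binary-quantized observation of sensor `i`: `B i = sgn (f (X i) + Z i - T i)`. -/
def obsB {E Ω : Type*} (f : E → ℝ) (X : ℕ → Ω → E) (Z T : ℕ → Ω → ℝ)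
    (i : ℕ) (ω : Ω) : ℝ :=
  sgn' (f (X i ω) + Z i ω - T i ω)

/-- Estimate of the `j`-th coefficient from the first `n` sensors:
`α̂_j = (c/n) ∑_{i<n} (φ_j(X_i))^* / p_X(X_i) * B_i`. -/
def alphaHat {E Ω : Type*} (c : ℝ) (pX : E → ℝ) (φ : ℕ → E → ℂ) (f : E → ℝ)
    (X : ℕ → Ω → E) (Z T : ℕ → Ω → ℝ) (n j : ℕ) (ω : Ω) : ℂ :=
  ((c : ℂ) / (n : ℂ)) * ∑ i ∈ Finset.range n,
    (starRingEnd ℂ) (φ j (X i ω)) / (pX (X i ω) : ℂ) * (obsB f X Z T i ω : ℂ)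

/-- The `j`-th coefficient of the field `f`: `α_j = ⟨f, φ_j⟩ = ∫_D f (φ_j)^*`. -/
def coeff {E : Type*} [MeasureSpace E] (D : Set E) (f : E → ℝ) (φ : ℕ → E → ℂ)
    (j : ℕ) : ℂ :=
  ∫ x in D, (f x : ℂ) * (starRingEnd ℂ) (φ j x)

/-- The `m`-term field estimate `f̂_{n,m} = ∑_{j<m} α̂_j φ_j`. -/
def fieldEst {E Ω : Type*} (c : ℝ) (pX : E → ℝ) (φ : ℕ → E → ℂ) (f : E → ℝ)
    (X : ℕ → Ω → E) (Z T : ℕ → Ω → ℝ) (n m : ℕ) (x : E) (ω : Ω) : ℂ :=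
  ∑ j ∈ Finset.range m, alphaHat c pX φ f X Z T n j ω * φ j x

/-- The `m`-term approximation `f_m = ∑_{j<m} α_j φ_j`. -/
def mApprox {E : Type*} [MeasureSpace E] (D : Set E) (f : E → ℝ) (φ : ℕ → E → ℂ)
    (m : ℕ) (x : E) : ℂ :=
  ∑ j ∈ Finset.range m, coeff D f φ j * φ j x

/-- The integrated mean squared error `E[‖f - f̂_{n,m}‖²]`. -/
def intMSE {E Ω : Type*} [MeasureSpace E] [MeasurableSpace Ω] (P : Measure Ω)
    (D : Set E) (c : ℝ) (pX : E → ℝ) (φ : ℕ → E → ℂ) (f : E → ℝ)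
    (X : ℕ → Ω → E) (Z T : ℕ → Ω → ℝ) (n m : ℕ) : ℝ :=
  ∫ ω, (∫ x in D, ‖(f x : ℂ) - fieldEst c pX φ f X Z T n m x ω‖ ^ 2) ∂P

/-- The `m`-term approximation error `ε[f,m] = ∑_{j≥m} |α_j|²`. -/
def tailErr {E : Type*} [MeasureSpace E] (D : Set E) (f : E → ℝ) (φ : ℕ → E → ℂ)
    (m : ℕ) : ℝ :=
  ∑' j : ℕ, ‖coeff D f φ (m + j)‖ ^ 2

/-- The deployment distribution: density `p_X` (w.r.t. Lebesgue measure) on `D`. -/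
def deployLaw {E : Type*} [MeasureSpace E] (D : Set E) (pX : E → ℝ) : Measure E :=
  (volume.restrict D).withDensity fun x => ENNReal.ofReal (pX x)

/-- The threshold distribution: uniform on `[-c, c]`. -/
def threshLaw (c : ℝ) : Measure ℝ :=
  (ENNReal.ofReal (1 / (2 * c))) • volume.restrict (Set.Icc (-c) c)

end

section Aux

open MeasureTheory

lemma sgn'_measurable : Measurable sgn' :=
  Measurable.ite measurableSet_Ioi measurable_const measurable_const

lemma sgn'_abs_le (u : ℝ) : |sgn' u| ≤ 1 := by
  unfold sgn'; split <;> simp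

lemma threshLaw_prob {c : ℝ} (hc : 0 < c) : IsProbabilityMeasure (threshLaw c) := by
  constructor
  rw [threshLaw, Measure.smul_apply, Measure.restrict_apply MeasurableSet.univ,
    Set.univ_inter, Real.volume_Icc, smul_eq_mul,
    ← ENNReal.ofReal_mul (by positivity)]
  rw [show 1 / (2 * c) * (c - -c) = 1 by field_simp; ring]
  simp

lemma integral_sgn'_threshLaw {c u : ℝ} (hc : 0 < c) (hu : u ∈ Set.Icc (-c) c) :
    ∫ t, sgn' (u - t) ∂(threshLaw c) = u / c := by
  haveI : IsFiniteMeasure (volume.restrict (Set.Icc (-c) c)) :=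
    ⟨by rw [Measure.restrict_apply_univ, Real.volume_Icc]; exact ENNReal.ofReal_lt_top⟩
  have h1 : ∀ t : ℝ, sgn' (u - t) = (Set.Iio u).indicator (fun _ => (2:ℝ)) t - 1 := by
    intro t
    unfold sgn'
    by_cases h : t < u
    · rw [Set.indicator_of_mem (Set.mem_Iio.mpr h), if_pos (by linarith)]; norm_num
    · rw [Set.indicator_of_notMem (by simpa using h), if_neg (by push_neg at h; linarith)]; norm_num
  rw [threshLaw, integral_smul_measure]
  simp_rw [h1]
  rw [integral_sub ((integrable_const (2:ℝ)).indicator measurableSet_Iio)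
      (integrable_const 1)]
  rw [integral_indicator measurableSet_Iio, Measure.restrict_restrict measurableSet_Iio,
    setIntegral_const, integral_const]
  have hset : Set.Iio u ∩ Set.Icc (-c) c = Set.Ico (-c) u := by
    ext t
    simp only [Set.mem_inter_iff, Set.mem_Iio, Set.mem_Icc, Set.mem_Ico]
    constructor
    · rintro ⟨h1, h2, _⟩; exact ⟨h2, h1⟩
    · rintro ⟨h2, h1⟩; exact ⟨h1, h2, le_of_lt (lt_of_lt_of_le h1 hu.2)⟩
  rw [hset, measureReal_def, measureReal_def, Real.volume_Ico, Measure.restrict_apply_univ, Real.volume_Icc,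
    ENNReal.toReal_ofReal (by positivity), ENNReal.toReal_ofReal (by linarith [hu.1]),
    ENNReal.toReal_ofReal (by linarith)]
  have hc' : (2 : ℝ) * c ≠ 0 := by positivity
  field_simp
  simp only [smul_eq_mul]
  field_simp
  ring

end Aux

/-- **Unbiasedness of the coefficient estimates.**
In the binary-sensing model, `E[α̂_j] = α_j = ⟨f, φ_j⟩` for every `j`. -/
theorem stmt1
    {d : ℕ} {D : Set (Fin d → ℝ)} (hDcomp : IsCompact D)
    (hDpos : 0 < volume D) (hDfin : volume D < ⊤)
    {a b c : ℝ} (ha : 0 < a) (hb : 0 < b) (hc : c = a + b)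
    {f : (Fin d → ℝ) → ℝ} (hfmeas : Measurable f)
    (hfbd : ∀ x ∈ D, f x ∈ Set.Icc (-a) a)
    {pX : (Fin d → ℝ) → ℝ} (hpXmeas : Measurable pX)
    (hpXpos : ∀ x ∈ D, 0 < pX x) (hpXone : (∫ x in D, pX x) = 1)
    {φ : ℕ → (Fin d → ℝ) → ℂ} (hφmeas : ∀ j, Measurable (φ j))
    (hφL2 : ∀ j, MemLp (φ j) 2 (volume.restrict D))
    (hON : ∀ j k, (∫ x in D, φ j x * (starRingEnd ℂ) (φ k x)) = if j = k then 1 else 0)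
    (hComplete : ∀ g : (Fin d → ℝ) → ℂ, Measurable g → MemLp g 2 (volume.restrict D) →
      (∑' j : ℕ, ‖∫ x in D, g x * (starRingEnd ℂ) (φ j x)‖ ^ 2) = ∫ x in D, ‖g x‖ ^ 2)
    {Ω : Type*} [MeasurableSpace Ω] (P : Measure Ω) [IsProbabilityMeasure P]
    (X : ℕ → Ω → (Fin d → ℝ)) (Z T : ℕ → Ω → ℝ)
    (hXmeas : ∀ i, Measurable (X i)) (hZmeas : ∀ i, Measurable (Z i))
    (hTmeas : ∀ i, Measurable (T i))
    (μZ : Measure ℝ) [IsProbabilityMeasure μZ]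
    (hZmean : (∫ z, z ∂μZ) = 0) (hZsupp : μZ (Set.Icc (-b) b)ᶜ = 0)
    (hlaw : ∀ i, Measure.map (fun ω => (X i ω, Z i ω, T i ω)) P =
      (deployLaw D pX).prod (μZ.prod (threshLaw c)))
    (hiid : iIndepFun (fun i ω => (X i ω, Z i ω, T i ω)) P)
    (n : ℕ) (hn : 0 < n) :
    ∀ j : ℕ, (∫ ω, alphaHat c pX φ f X Z T n j ω ∂P) = coeff D f φ j := by
  intro j
  classical
  have hDm : MeasurableSet D := hDcomp.isClosed.measurableSet
  have hc0 : 0 < c := by rw [hc]; linarith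
  haveI : IsProbabilityMeasure (threshLaw c) := threshLaw_prob hc0
  haveI : IsFiniteMeasure (volume.restrict D) :=
    ⟨by rwa [Measure.restrict_apply_univ]⟩
  have hpXint : Integrable pX (volume.restrict D) := by
    by_contra h
    rw [integral_undef h] at hpXone
    norm_num at hpXone
  have hmemD : ∀ᵐ x ∂(volume.restrict D), x ∈ D := ae_restrict_mem hDm
  have hpX_nn : ∀ᵐ x ∂(volume.restrict D), 0 ≤ pX x := by
    filter_upwards [hmemD] with x hx using (hpXpos x hx).le
  -- the deployment law is a probability measure
  haveI : IsProbabilityMeasure (deployLaw D pX) := by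
    constructor
    rw [deployLaw, withDensity_apply _ MeasurableSet.univ, Measure.restrict_univ,
      ← ofReal_integral_eq_lintegral_ofReal hpXint hpX_nn, hpXone]
    simp
  set μX : Measure (Fin d → ℝ) := deployLaw D pX with hμX
  set ν : Measure (ℝ × ℝ) := μZ.prod (threshLaw c) with hν
  haveI : IsProbabilityMeasure ν := by rw [hν]; infer_instance
  -- conjugation facts
  have hconj : Measurable fun x => (starRingEnd ℂ) (φ j x) :=
    Complex.continuous_conj.measurable.comp (hφmeas j)
  -- the integrand as a function on the product space
  set H : (Fin d → ℝ) → ℂ := fun x => (starRingEnd ℂ) (φ j x) / (pX x : ℂ) with hH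
  set G : (Fin d → ℝ) × ℝ × ℝ → ℂ :=
    fun p => H p.1 * ((sgn' (f p.1 + p.2.1 - p.2.2) : ℝ) : ℂ) with hG
  have hHmeas : Measurable H :=
    hconj.div (Complex.measurable_ofReal.comp hpXmeas)
  have hGmeas : Measurable G := by
    apply (hHmeas.comp measurable_fst).mul
    exact Complex.measurable_ofReal.comp (sgn'_measurable.comp
      (((hfmeas.comp measurable_fst).add (measurable_fst.comp measurable_snd)).sub
        (measurable_snd.comp measurable_snd)))
  -- H is integrable w.r.t. the deployment law
  have hφint : Integrable (φ j) (volume.restrict D) := (hφL2 j).integrable one_le_two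
  have hconjint : Integrable (fun x => (starRingEnd ℂ) (φ j x)) (volume.restrict D) := by
    refine Integrable.mono' hφint.norm hconj.aestronglyMeasurable ?_
    exact Filter.Eventually.of_forall fun x => by simp
  have hHint : Integrable H μX := by
    rw [hμX, deployLaw,
      show (fun x => ENNReal.ofReal (pX x)) = (fun x => ((pX x).toNNReal : ℝ≥0∞)) from rfl,
      integrable_withDensity_iff_integrable_smul hpXmeas.real_toNNReal]
    have hae : (fun x => (pX x).toNNReal • H x)
        =ᵐ[volume.restrict D] fun x => (starRingEnd ℂ) (φ j x) := by
      filter_upwards [hmemD] with x hx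
      have hpos := hpXpos x hx
      have h0 : (pX x : ℂ) ≠ 0 := by
        exact_mod_cast Complex.ofReal_ne_zero.mpr hpos.ne'
      rw [NNReal.smul_def, Real.coe_toNNReal _ hpos.le, Complex.real_smul, hH]
      field_simp
    exact (integrable_congr hae).mpr hconjint
  -- G is integrable on the product
  have hGint : Integrable G (μX.prod ν) := by
    have h1 : Integrable (fun p : (Fin d → ℝ) × ℝ × ℝ => ‖H p.1‖) (μX.prod ν) := by
      have := hHint.norm.mul_prod (integrable_const (1:ℝ) (μ := ν))
      simpa using this
    refine Integrable.mono' h1 hGmeas.aestronglyMeasurable ?_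
    refine Filter.Eventually.of_forall fun p => ?_
    rw [hG]
    calc ‖H p.1 * ((sgn' (f p.1 + p.2.1 - p.2.2) : ℝ) : ℂ)‖
        = ‖H p.1‖ * |sgn' (f p.1 + p.2.1 - p.2.2)| := by
          rw [norm_mul, Complex.norm_real, Real.norm_eq_abs]
      _ ≤ ‖H p.1‖ * 1 := by
          exact mul_le_mul_of_nonneg_left (sgn'_abs_le _) (norm_nonneg _)
      _ = ‖H p.1‖ := mul_one _
  -- a.e. membership in D under μX
  have hmemD' : ∀ᵐ x ∂μX, x ∈ D := by
    have : μX ≪ volume.restrict D := by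
      rw [hμX, deployLaw]; exact withDensity_absolutelyContinuous _ _
    exact this.ae_le hmemD
  -- Z is a.e. in [-b,b]
  have hZae : ∀ᵐ z ∂μZ, z ∈ Set.Icc (-b) b := by
    rw [ae_iff]
    exact hZsupp
  have hZint : Integrable (fun z : ℝ => z) μZ := by
    refine Integrable.mono' (integrable_const b) measurable_id.aestronglyMeasurable ?_
    filter_upwards [hZae] with z hz
    rw [Real.norm_eq_abs]
    exact abs_le.mpr ⟨hz.1, hz.2⟩
  -- inner integral: for x ∈ D, ∫ sgn' over ν equals f x / c
  have hinner : ∀ x ∈ D,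
      (∫ y : ℝ × ℝ, sgn' (f x + y.1 - y.2) ∂ν) = f x / c := by
    intro x hx
    have hSmeas : Measurable fun y : ℝ × ℝ => sgn' (f x + y.1 - y.2) :=
      sgn'_measurable.comp ((measurable_const.add measurable_fst).sub measurable_snd)
    have hSint : Integrable (fun y : ℝ × ℝ => sgn' (f x + y.1 - y.2)) ν := by
      refine Integrable.mono' (integrable_const 1) hSmeas.aestronglyMeasurable ?_
      exact Filter.Eventually.of_forall fun y => by
        rw [Real.norm_eq_abs]; exact sgn'_abs_le _
    rw [hν, integral_prod _ hSint]
    have hzstep : (fun z => ∫ t, sgn' (f x + z - t) ∂(threshLaw c))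
        =ᵐ[μZ] fun z => (f x + z) / c := by
      filter_upwards [hZae] with z hz
      have hfx := hfbd x hx
      refine integral_sgn'_threshLaw hc0 ⟨?_, ?_⟩
      · rw [hc]; linarith [hfx.1, hz.1]
      · rw [hc]; linarith [hfx.2, hz.2]
    rw [integral_congr_ae hzstep]
    have : ∀ z : ℝ, (f x + z) / c = (f x + z) * (1 / c) := fun z => by ring
    simp_rw [this]
    rw [integral_mul_const, integral_add (integrable_const _) hZint, hZmean,
      integral_const]
    simp [div_eq_mul_inv]
  -- Fubini for G
  have hGval : (∫ p, G p ∂(μX.prod ν)) = coeff D f φ j / (c : ℂ) := by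
    rw [integral_prod _ hGint]
    have hstep : (fun x => ∫ y, G (x, y) ∂ν)
        =ᵐ[μX] fun x => H x * ((f x / c : ℝ) : ℂ) := by
      filter_upwards [hmemD'] with x hx
      rw [hG]
      simp only
      rw [integral_const_mul,
        show (∫ y : ℝ × ℝ, ((sgn' (f x + y.1 - y.2) : ℝ) : ℂ) ∂ν)
            = ((∫ y : ℝ × ℝ, sgn' (f x + y.1 - y.2) ∂ν : ℝ) : ℂ) from integral_ofReal,
        hinner x hx]
    rw [integral_congr_ae hstep]
    -- back to Lebesgue integral over D
    rw [hμX, deployLaw,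
      show (fun x => ENNReal.ofReal (pX x)) = (fun x => ((pX x).toNNReal : ℝ≥0∞)) from rfl,
      integral_withDensity_eq_integral_smul hpXmeas.real_toNNReal]
    have hae2 : (fun x => (pX x).toNNReal • (H x * ((f x / c : ℝ) : ℂ)))
        =ᵐ[volume.restrict D]
        fun x => ((f x : ℂ) * (starRingEnd ℂ) (φ j x)) / (c : ℂ) := by
      filter_upwards [hmemD] with x hx
      have hpos := hpXpos x hx
      have h0 : (pX x : ℂ) ≠ 0 := Complex.ofReal_ne_zero.mpr hpos.ne'
      have hc0' : (c : ℂ) ≠ 0 := Complex.ofReal_ne_zero.mpr hc0.ne'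
      rw [NNReal.smul_def, Real.coe_toNNReal _ hpos.le, Complex.real_smul, hH]
      push_cast
      field_simp
    rw [integral_congr_ae hae2, integral_div, coeff]
  -- transfer to Ω for each sensor
  have hVmeas : ∀ i, Measurable fun ω => (X i ω, Z i ω, T i ω) := fun i =>
    (hXmeas i).prodMk ((hZmeas i).prodMk (hTmeas i))
  have hGcomp : ∀ i, (fun ω => G (X i ω, Z i ω, T i ω)) =
      fun ω => (starRingEnd ℂ) (φ j (X i ω)) / (pX (X i ω) : ℂ) * (obsB f X Z T i ω : ℂ) := by
    intro i; rfl
  have hkey : ∀ i, (∫ ω, (starRingEnd ℂ) (φ j (X i ω)) / (pX (X i ω) : ℂ)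
      * (obsB f X Z T i ω : ℂ) ∂P) = coeff D f φ j / (c : ℂ) := by
    intro i
    rw [← hGcomp i, ← integral_map (hVmeas i).aemeasurable
      (by rw [hlaw i]; exact hGmeas.aestronglyMeasurable), hlaw i, hGval]
  have hintP : ∀ i, Integrable (fun ω => (starRingEnd ℂ) (φ j (X i ω)) / (pX (X i ω) : ℂ)
      * (obsB f X Z T i ω : ℂ)) P := by
    intro i
    rw [← hGcomp i]
    have := (integrable_map_measure
      (by rw [hlaw i]; exact hGmeas.aestronglyMeasurable)
      (hVmeas i).aemeasurable).mp (by rw [hlaw i]; exact hGint)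
    exact this
  -- conclude
  unfold alphaHat
  rw [integral_const_mul, integral_finset_sum _ fun i _ => hintP i]
  have : ∀ i ∈ Finset.range n, (∫ ω, (starRingEnd ℂ) (φ j (X i ω)) / (pX (X i ω) : ℂ)
      * (obsB f X Z T i ω : ℂ) ∂P) = coeff D f φ j / (c : ℂ) := fun i _ => hkey i
  rw [Finset.sum_congr rfl this, Finset.sum_const, Finset.card_range, nsmul_eq_mul]
  have hn0 : (n : ℂ) ≠ 0 := Nat.cast_ne_zero.mpr hn.ne'
  have hc0' : (c : ℂ) ≠ 0 := Complex.ofReal_ne_zero.mpr hc0.ne'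
  field_simp
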